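/- Let φ: A ↠ B be a surjective morphism of synchronous algebras and Acc ⊆ B a closed subset. Then for all a, a' ∈ A: a ~_{φ⁻¹[Acc]} a' if and only if φ(a) ~_{Acc} φ(a'). -/

import Mathlib

/-- Letter-types: `l` for a pair of proper letters, `p` for (letter, padding),
`q` for (padding, letter). -/
inductive LTy | l | p | q
deriving DecidableEq

/-- The five types of (well-formed) synchronous words:
`ll`, `ll→lb` (= `lllb`), `lb`, `ll→bl` (= `llbl`), `bl`. -/
inductive STy | ll | lllb | lb | llbl | bl
deriving DecidableEq

namespace STy

/-- Letter-type of the first letter. -/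
def src : STy → LTy
  | ll => .l | lllb => .l | lb => .p | llbl => .l | bl => .q

/-- Letter-type of the last letter. -/
def tgt : STy → LTy
  | ll => .l | lllb => .p | lb => .p | llbl => .q | bl => .q

/-- `σ = α→β` is compatible with `τ = β'→γ` iff `β = β'` or `β = ll`. -/
def compat (σ τ : STy) : Prop := σ.tgt = τ.src ∨ σ.tgt = LTy.l

/-- Product of compatible types (junk on incompatible pairs). -/
def comp : STy → STy → STy
  | ll, ll => ll
  | ll, lllb => lllb
  | ll, lb => lllb
  | ll, llbl => llbl
  | ll, bl => llbl
  | lllb, _ => lllb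
  | lb, _ => lb
  | llbl, _ => llbl
  | bl, _ => bl

end STy

/-- A synchronous algebra: a `STy`-typed set with a dependency relation and a
partial associative product defined exactly on compatible pairs, monotone with
respect to dependency, with units.  The partial product is modelled as an
`Option`-valued total product. -/
structure SyncAlg where
  A : Type
  ty : A → STy
  dep : A → A → Prop
  mul : A → A → Option A
  dep_refl : ∀ x, dep x x
  dep_symm : ∀ {x y}, dep x y → dep y x
  dep_eq : ∀ {x y}, dep x y → ty x = ty y → x = y
  mul_defined : ∀ x y, (mul x y).isSome ↔ (ty x).compat (ty y)
  ty_mul : ∀ {x y z}, mul x y = some z → ty z = (ty x).comp (ty y)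
  mul_assoc : ∀ x y z,
    (mul x y).bind (fun a => mul a z) = (mul y z).bind (fun b => mul x b)
  dep_mul_left : ∀ {x x' y z z'}, dep x x' →
    mul x y = some z → mul x' y = some z' → dep z z'
  dep_mul_right : ∀ {x x' y z z'}, dep x x' →
    mul y x = some z → mul y x' = some z' → dep z z'
  unit : STy → A
  ty_unit : ∀ τ, ty (unit τ) = τ
  unit_mul : ∀ {τ x z}, mul (unit τ) x = some z → dep z x
  mul_unit : ∀ {τ x z}, mul x (unit τ) = some z → dep z x
  unit_lllb : mul (unit .ll) (unit .lb) = some (unit .lllb)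
  unit_llbl : mul (unit .ll) (unit .bl) = some (unit .llbl)

namespace SyncAlg

/-- A closed subset of a synchronous algebra: saturated under dependency. -/
def Closed (S : SyncAlg) (C : Set S.A) : Prop :=
  ∀ {x y : S.A}, S.dep x y → (x ∈ C ↔ y ∈ C)

/-- Two-sided partial product `x·a·y`. -/
def mul3 (S : SyncAlg) (x a y : S.A) : Option S.A :=
  (S.mul x a).bind fun u => S.mul u y

/-- The syntactic congruence of a subset `C` of a synchronous algebra. -/
def synCong (S : SyncAlg) (C : Set S.A) (a b : S.A) : Prop :=
  (∀ x y u v, S.mul3 x a y = some u → S.mul3 x b y = some v → (u ∈ C ↔ v ∈ C)) ∧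
  (∀ x u v, S.mul x a = some u → S.mul x b = some v → (u ∈ C ↔ v ∈ C)) ∧
  (∀ y u v, S.mul a y = some u → S.mul b y = some v → (u ∈ C ↔ v ∈ C))

/-- Left residual `x⁻¹C` of a closed subset `C` by an element `x`. -/
def lres (S : SyncAlg) (x : S.A) (C : Set S.A) : Set S.A :=
  { y | ∃ y' u, S.synCong C y' y ∧ S.mul x y' = some u ∧ u ∈ C }

/-- Right residual `C·x⁻¹` of a closed subset `C` by an element `x`. -/
def rres (S : SyncAlg) (x : S.A) (C : Set S.A) : Set S.A :=
  { y | ∃ y' u, S.synCong C y' y ∧ S.mul y' x = some u ∧ u ∈ C }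

end SyncAlg

/-- Morphisms of synchronous algebras: preserve types, units, product and
dependency. -/
structure SyncHom (S T : SyncAlg) where
  toFun : S.A → T.A
  map_ty : ∀ x, T.ty (toFun x) = S.ty x
  map_unit : ∀ τ, toFun (S.unit τ) = T.unit τ
  map_mul : ∀ {x y z}, S.mul x y = some z →
    T.mul (toFun x) (toFun y) = some (toFun z)
  map_dep : ∀ {x y}, S.dep x y → T.dep (toFun x) (toFun y)

/-- Lift a defined product in `T` along a morphism. -/
lemma SyncHom.lift_mul {S T : SyncAlg} (φ : SyncHom S T) {x y : S.A} {w : T.A}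
    (h : T.mul (φ.toFun x) (φ.toFun y) = some w) :
    ∃ z, S.mul x y = some z ∧ φ.toFun z = w := by
  have hc : (T.ty (φ.toFun x)).compat (T.ty (φ.toFun y)) :=
    (T.mul_defined _ _).mp (by rw [h]; rfl)
  rw [φ.map_ty, φ.map_ty] at hc
  have hs : (S.mul x y).isSome := (S.mul_defined x y).mpr hc
  obtain ⟨z, hz⟩ := Option.isSome_iff_exists.mp hs
  refine ⟨z, hz, ?_⟩
  have := φ.map_mul hz
  rw [h] at this
  exact (Option.some_inj.mp this).symm

/-- If `φ : A ↠ B` is a surjective morphism of synchronous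
algebras and `Acc ⊆ B` is a closed subset, then for all `a, a' ∈ A`,
`a ~_{φ⁻¹[Acc]} a'` iff `φ(a) ~_{Acc} φ(a')`. -/
theorem synCong_preimage (S T : SyncAlg) (φ : SyncHom S T)
    (hφ : Function.Surjective φ.toFun) (Acc : Set T.A) (hAcc : T.Closed Acc) :
    ∀ a a' : S.A,
      S.synCong (φ.toFun ⁻¹' Acc) a a' ↔ T.synCong Acc (φ.toFun a) (φ.toFun a') := by
  intro a a'
  constructor
  · rintro ⟨h3, hl, hr⟩
    refine ⟨?_, ?_, ?_⟩
    · intro x y u v hu hv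
      obtain ⟨x₀, rfl⟩ := hφ x
      obtain ⟨y₀, rfl⟩ := hφ y
      -- decompose hu
      unfold SyncAlg.mul3 at hu hv
      obtain ⟨p, hp, hpu⟩ := Option.bind_eq_some_iff.mp hu
      obtain ⟨p', hp', hpv⟩ := Option.bind_eq_some_iff.mp hv
      obtain ⟨p₀, hp₀, rfl⟩ := φ.lift_mul hp
      obtain ⟨p₀', hp₀', rfl⟩ := φ.lift_mul hp'
      obtain ⟨u₀, hu₀, rfl⟩ := φ.lift_mul hpu
      obtain ⟨v₀, hv₀, rfl⟩ := φ.lift_mul hpv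
      have h1 : S.mul3 x₀ a y₀ = some u₀ := by
        unfold SyncAlg.mul3; rw [hp₀]; exact hu₀
      have h2 : S.mul3 x₀ a' y₀ = some v₀ := by
        unfold SyncAlg.mul3; rw [hp₀']; exact hv₀
      exact h3 x₀ y₀ u₀ v₀ h1 h2
    · intro x u v hu hv
      obtain ⟨x₀, rfl⟩ := hφ x
      obtain ⟨u₀, hu₀, rfl⟩ := φ.lift_mul hu
      obtain ⟨v₀, hv₀, rfl⟩ := φ.lift_mul hv
      exact hl x₀ u₀ v₀ hu₀ hv₀
    · intro y u v hu hv
      obtain ⟨y₀, rfl⟩ := hφ y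
      obtain ⟨u₀, hu₀, rfl⟩ := φ.lift_mul hu
      obtain ⟨v₀, hv₀, rfl⟩ := φ.lift_mul hv
      exact hr y₀ u₀ v₀ hu₀ hv₀
  · rintro ⟨h3, hl, hr⟩
    refine ⟨?_, ?_, ?_⟩
    · intro x y u v hu hv
      unfold SyncAlg.mul3 at hu hv
      obtain ⟨p, hp, hpu⟩ := Option.bind_eq_some_iff.mp hu
      obtain ⟨p', hp', hpv⟩ := Option.bind_eq_some_iff.mp hv
      have h1 : T.mul3 (φ.toFun x) (φ.toFun a) (φ.toFun y) = some (φ.toFun u) := by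
        unfold SyncAlg.mul3; rw [φ.map_mul hp]; exact φ.map_mul hpu
      have h2 : T.mul3 (φ.toFun x) (φ.toFun a') (φ.toFun y) = some (φ.toFun v) := by
        unfold SyncAlg.mul3; rw [φ.map_mul hp']; exact φ.map_mul hpv
      exact h3 _ _ _ _ h1 h2
    · intro x u v hu hv
      exact hl _ _ _ (φ.map_mul hu) (φ.map_mul hv)
    · intro y u v hu hv
      exact hr _ _ _ (φ.map_mul hu) (φ.map_mul hv)
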